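/- arXiv:2211.16019 — 4 statements merged into one kernel-verified Lean document; each statement's English description precedes it below -/
import Mathlib

section
/- Let (Ω, mΩ, μ) be a probability space with Ω a standard Borel space, let S : Ω → 𝒮, Z : Ω → 𝒵, Y : Ω → 𝒴 be measurable maps into measurable spaces, let f : 𝒮 × 𝒵 → ℐ be a measurable embedding, and set I := (ω ↦ f (S ω, Z ω)). Let ψ : ℐ → 𝒮 be measurable with ψ(f(s, z)) = s for all s, z. If σ(Y) and σ(Z) are conditionally independent given σ(S), then σ(Y) and σ(I) are conditionally independent given σ(ψ ∘ I). -/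
open MeasureTheory ProbabilityTheory MeasurableSpace

/-- Transport conditional independence along equalities of σ-algebras. -/
lemma condIndep_congr {Ω : Type*} {m' m₁ m₂ n' n₂ : MeasurableSpace Ω}
    {mΩ : MeasurableSpace Ω} [StandardBorelSpace Ω] {μ : Measure Ω} [IsFiniteMeasure μ]
    (e' : n' = m') (e₂ : n₂ = m₂) {hm' : m' ≤ mΩ}
    (h : CondIndep m' m₁ m₂ hm' μ) (hn : n' ≤ mΩ) :
    CondIndep n' m₁ n₂ hn μ := by
  subst e' e₂; exact h

/-- If `m₁` and `m₂` are conditionally independent given `m'`, then `m₁` and `m' ⊔ m₂`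
are conditionally independent given `m'`. -/
lemma CondIndep.sup_right' {Ω : Type*} {m' m₁ m₂ : MeasurableSpace Ω}
    {mΩ : MeasurableSpace Ω} [StandardBorelSpace Ω] {μ : Measure Ω} [IsFiniteMeasure μ]
    (hm' : m' ≤ mΩ) (hm₁ : m₁ ≤ mΩ) (hm₂ : m₂ ≤ mΩ)
    (h : CondIndep m' m₁ m₂ hm' μ) :
    CondIndep m' m₁ (m' ⊔ m₂) hm' μ := by
  set p2 : Set (Set Ω) :=
    {u | ∃ s t, MeasurableSet[m'] s ∧ MeasurableSet[m₂] t ∧ u = s ∩ t} with hp2def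
  have hp2 : IsPiSystem p2 := by
    rintro u ⟨s1, t1, hs1, ht1, rfl⟩ v ⟨s2, t2, hs2, ht2, rfl⟩ -
    exact ⟨s1 ∩ s2, t1 ∩ t2, hs1.inter hs2, ht1.inter ht2, by
      ext x; simp [Set.mem_inter_iff]; tauto⟩
  have hgen : m' ⊔ m₂ = MeasurableSpace.generateFrom p2 := by
    refine le_antisymm (sup_le ?_ ?_) (MeasurableSpace.generateFrom_le ?_)
    · intro s hs
      exact MeasurableSpace.measurableSet_generateFrom
        ⟨s, Set.univ, hs, MeasurableSet.univ, (Set.inter_univ s).symm⟩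
    · intro t ht
      exact MeasurableSpace.measurableSet_generateFrom
        ⟨Set.univ, t, MeasurableSet.univ, ht, (Set.univ_inter t).symm⟩
    · rintro u ⟨s, t, hs, ht, rfl⟩
      exact ((le_sup_left : m' ≤ m' ⊔ m₂) _ hs).inter ((le_sup_right : m₂ ≤ m' ⊔ m₂) _ ht)
  refine CondIndepSets.condIndep (p1 := {s | MeasurableSet[m₁] s}) hm₁ (sup_le hm' hm₂)
    (@isPiSystem_measurableSet Ω m₁) hp2
    (@generateFrom_measurableSet Ω m₁).symm hgen ?_
  have hs2m : ∀ u ∈ p2, MeasurableSet u := by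
    rintro u ⟨s, t, hs, ht, rfl⟩
    exact (hm' s hs).inter (hm₂ t ht)
  refine (condIndepSets_iff m' hm' {s | MeasurableSet[m₁] s} p2
    (fun s hs => hm₁ s hs) hs2m μ).mpr ?_
  rintro A u hA ⟨s, t, hs, ht, rfl⟩
  rw [condIndep_iff m' m₁ m₂ hm' hm₁ hm₂ μ] at h
  have key := h A t hA ht
  -- rewrite A ∩ (s ∩ t) = s ∩ (A ∩ t)
  have hset : A ∩ (s ∩ t) = s ∩ (A ∩ t) := by
    ext x; simp [Set.mem_inter_iff]; tauto
  have hint : Integrable ((A ∩ t).indicator (fun _ => (1 : ℝ))) μ :=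
    (integrable_const (1 : ℝ)).indicator ((hm₁ A hA).inter (hm₂ t ht))
  have hintt : Integrable (t.indicator (fun _ => (1 : ℝ))) μ :=
    (integrable_const (1 : ℝ)).indicator (hm₂ t ht)
  have h1 : (μ⟦A ∩ (s ∩ t) | m'⟧) =ᵐ[μ] s.indicator (μ⟦A ∩ t | m'⟧) := by
    rw [hset, ← Set.indicator_indicator]
    exact condExp_indicator hint hs
  have h2 : (μ⟦s ∩ t | m'⟧) =ᵐ[μ] s.indicator (μ⟦t | m'⟧) := by
    rw [← Set.indicator_indicator]
    exact condExp_indicator hintt hs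
  filter_upwards [h1, h2, key] with ω hω1 hω2 hωk
  rw [hω1, Pi.mul_apply, hω2]
  by_cases hωs : ω ∈ s
  · simp only [Set.indicator_of_mem hωs]
    rw [hωk]; rfl
  · simp [Set.indicator_of_notMem hωs]

/-- If `ψ` recovers exactly the causal features `S` from the image `I = f (S, Z)` and
`Y ⊥ Z | S`, then `Y ⊥ I | ψ ∘ I`. -/
theorem condIndep_image_of_condIndep_noncausal
    {Ω 𝒮 𝒵 𝒴 ℐ : Type*} {mΩ : MeasurableSpace Ω} [StandardBorelSpace Ω]
    {m𝒮 : MeasurableSpace 𝒮} {m𝒵 : MeasurableSpace 𝒵} {m𝒴 : MeasurableSpace 𝒴}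
    {mℐ : MeasurableSpace ℐ}
    (μ : Measure Ω) [IsProbabilityMeasure μ]
    {S : Ω → 𝒮} {Z : Ω → 𝒵} {Y : Ω → 𝒴}
    (hS : Measurable S) (hZ : Measurable Z) (hY : Measurable Y)
    {f : 𝒮 × 𝒵 → ℐ} (hf : MeasurableEmbedding f)
    {ψ : ℐ → 𝒮} (hψ : Measurable ψ) (hψf : ∀ s z, ψ (f (s, z)) = s)
    (h : CondIndep (MeasurableSpace.comap S m𝒮)
      (MeasurableSpace.comap Y m𝒴) (MeasurableSpace.comap Z m𝒵) hS.comap_le μ) :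
    CondIndep
      (MeasurableSpace.comap (fun ω => ψ (f (S ω, Z ω))) m𝒮)
      (MeasurableSpace.comap Y m𝒴)
      (MeasurableSpace.comap (fun ω => f (S ω, Z ω)) mℐ)
      ((hψ.comp (hf.measurable.comp (hS.prodMk hZ))).comap_le) μ := by
  have e' : MeasurableSpace.comap (fun ω => ψ (f (S ω, Z ω))) m𝒮
      = MeasurableSpace.comap S m𝒮 := by
    congr 1
    funext ω
    exact hψf _ _
  have e₂ : MeasurableSpace.comap (fun ω => f (S ω, Z ω)) mℐ
      = MeasurableSpace.comap S m𝒮 ⊔ MeasurableSpace.comap Z m𝒵 := by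
    have : (fun ω => f (S ω, Z ω)) = f ∘ (fun ω => (S ω, Z ω)) := rfl
    rw [this, ← MeasurableSpace.comap_comp, hf.comap_eq]
    show MeasurableSpace.comap (fun ω => (S ω, Z ω)) (m𝒮.prod m𝒵) = _
    rw [MeasurableSpace.prod, MeasurableSpace.comap_sup,
      MeasurableSpace.comap_comp, MeasurableSpace.comap_comp]
    rfl
  exact condIndep_congr e' e₂
    (CondIndep.sup_right' hS.comap_le hY.comap_le hZ.comap_le h) _
end

section
/- Let (Ω, mΩ, μ) be a probability space with Ω a standard Borel space, let S : Ω → 𝒮, Z : Ω → 𝒵, Y : Ω → 𝒴 be measurable maps into measurable spaces, let f : 𝒮 × 𝒵 → ℐ be a measurable embedding, set I := (ω ↦ f (S ω, Z ω)), and let ψ : ℐ → 𝒲 be measurable. Suppose σ(Y) and σ(Z) are NOT conditionally independent given σ(S), and suppose σ(Y) and σ(I) are conditionally independent given σ(ψ ∘ I). Then there is no measurable h : 𝒮 → 𝒲 with ψ(f(s, z)) = h(s) for all s, z; that is, the representation ψ necessarily depends on the non-causal features Z. -/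
open MeasureTheory ProbabilityTheory

/-- First bullet of Theorem 1: if `Y` and `Z` are not conditionally independent given `S`,
but `Y ⊥ I | ψ ∘ I` for the image `I = f (S, Z)`, then the representation `ψ` cannot factor
through the causal features `S` alone, i.e. it must depend on `Z`. -/
theorem representation_depends_on_noncausal
    {Ω 𝒮 𝒵 𝒴 ℐ 𝒲 : Type*} {mΩ : MeasurableSpace Ω} [StandardBorelSpace Ω]
    {m𝒮 : MeasurableSpace 𝒮} {m𝒵 : MeasurableSpace 𝒵} {m𝒴 : MeasurableSpace 𝒴}
    {mℐ : MeasurableSpace ℐ} {m𝒲 : MeasurableSpace 𝒲}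
    (μ : Measure Ω) [IsProbabilityMeasure μ]
    {S : Ω → 𝒮} {Z : Ω → 𝒵} {Y : Ω → 𝒴}
    (hS : Measurable S) (hZ : Measurable Z) (hY : Measurable Y)
    {f : 𝒮 × 𝒵 → ℐ} (hf : MeasurableEmbedding f)
    {ψ : ℐ → 𝒲} (hψ : Measurable ψ)
    (hdep : ¬ CondIndep (MeasurableSpace.comap S m𝒮)
      (MeasurableSpace.comap Y m𝒴) (MeasurableSpace.comap Z m𝒵) hS.comap_le μ)
    (hci : CondIndep
      (MeasurableSpace.comap (fun ω => ψ (f (S ω, Z ω))) m𝒲)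
      (MeasurableSpace.comap Y m𝒴)
      (MeasurableSpace.comap (fun ω => f (S ω, Z ω)) mℐ)
      ((hψ.comp (hf.measurable.comp (hS.prodMk hZ))).comap_le) μ) :
    ¬ ∃ h : 𝒮 → 𝒲, Measurable h ∧ ∀ s z, ψ (f (s, z)) = h s := by
  rintro ⟨h, hh, hfac⟩
  have hSZ : Measurable fun ω => (S ω, Z ω) := hS.prodMk hZ
  have hImeas : Measurable fun ω => f (S ω, Z ω) := hf.measurable.comp hSZ
  set mW := MeasurableSpace.comap (fun ω => ψ (f (S ω, Z ω))) m𝒲 with hmW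
  set mS := MeasurableSpace.comap S m𝒮 with hmS
  set mI := MeasurableSpace.comap (fun ω => f (S ω, Z ω)) mℐ with hmI
  letI : MeasurableSpace Ω := mΩ
  have hWS : mW ≤ mS := by
    have he : (fun ω => ψ (f (S ω, Z ω))) = h ∘ S := funext fun ω => hfac (S ω) (Z ω)
    rw [hmW, he, ← MeasurableSpace.comap_comp]
    exact MeasurableSpace.comap_mono hh.comap_le
  have hIeq : mI = MeasurableSpace.comap (fun ω => (S ω, Z ω)) Prod.instMeasurableSpace := by
    have hcomp : (fun ω => f (S ω, Z ω)) = f ∘ (fun ω => (S ω, Z ω)) := rfl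
    rw [hmI, hcomp, ← MeasurableSpace.comap_comp, hf.comap_eq]
  have hSI : mS ≤ mI := by
    rw [hIeq, hmS]
    have hSfst : S = Prod.fst ∘ (fun ω => (S ω, Z ω)) := rfl
    rw [hSfst, ← MeasurableSpace.comap_comp]
    exact MeasurableSpace.comap_mono measurable_fst.comap_le
  have hZI : MeasurableSpace.comap Z m𝒵 ≤ mI := by
    rw [hIeq]
    have hZsnd : Z = Prod.snd ∘ (fun ω => (S ω, Z ω)) := rfl
    rw [hZsnd, ← MeasurableSpace.comap_comp]
    exact MeasurableSpace.comap_mono measurable_snd.comap_le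
  have hWΩ : mW ≤ mΩ := (hψ.comp hImeas).comap_le
  have hIΩ : mI ≤ mΩ := hImeas.comap_le
  have hSΩ : mS ≤ mΩ := hS.comap_le
  have hWI : mW ≤ mI := hWS.trans hSI
  rw [condIndep_iff _ _ _ hWΩ hY.comap_le hIΩ μ] at hci
  apply hdep
  rw [condIndep_iff _ _ _ hSΩ hY.comap_le hZ.comap_le μ]
  intro A B hA hB
  have hAΩ : MeasurableSet[mΩ] A := hY.comap_le _ hA
  have hBI : MeasurableSet[mI] B := hZI _ hB
  have hBΩ : MeasurableSet[mΩ] B := hIΩ _ hBI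
  have hint : Integrable (A.indicator (fun _ => (1 : ℝ))) μ :=
    (integrable_const 1).indicator hAΩ
  -- Key step: the conditional expectation of `1_A` given `mI` is `mW`-measurable,
  -- namely it equals the conditional expectation given `mW`.
  have key : (μ⟦A | mW⟧) =ᵐ[μ] μ⟦A | mI⟧ := by
    refine ae_eq_condExp_of_forall_setIntegral_eq hIΩ hint
      (fun s _ _ => integrable_condExp.integrableOn) (fun s hs _ => ?_)
      (stronglyMeasurable_condExp.aestronglyMeasurable.mono hWI)
    have hsΩ : MeasurableSet[mΩ] s := hIΩ _ hs
    have h1 : (μ⟦A ∩ s | mW⟧) =ᵐ[μ] (μ⟦A | mW⟧) * (μ⟦s | mW⟧) := hci A s hA hs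
    have hprod : (μ⟦A | mW⟧) * s.indicator (fun _ => (1 : ℝ)) = s.indicator (μ⟦A | mW⟧) := by
      funext x; by_cases hx : x ∈ s <;> simp [hx]
    have hprodInt : Integrable ((μ⟦A | mW⟧) * s.indicator (fun _ => (1 : ℝ))) μ := by
      rw [hprod]; exact integrable_condExp.indicator hsΩ
    have h3 : (μ[(μ⟦A | mW⟧) * s.indicator (fun _ => (1 : ℝ)) | mW]) =ᵐ[μ]
        (μ⟦A | mW⟧) * (μ⟦s | mW⟧) :=
      condExp_mul_of_aestronglyMeasurable_left stronglyMeasurable_condExp.aestronglyMeasurable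
        hprodInt ((integrable_const 1).indicator hsΩ)
    calc ∫ x in s, (μ⟦A | mW⟧) x ∂μ
        = ∫ x, s.indicator (μ⟦A | mW⟧) x ∂μ := (integral_indicator hsΩ).symm
      _ = ∫ x, ((μ⟦A | mW⟧) * s.indicator (fun _ => (1 : ℝ))) x ∂μ := by rw [hprod]
      _ = ∫ x, (μ[(μ⟦A | mW⟧) * s.indicator (fun _ => (1 : ℝ)) | mW]) x ∂μ :=
          (integral_condExp hWΩ).symm
      _ = ∫ x, ((μ⟦A | mW⟧) * (μ⟦s | mW⟧)) x ∂μ := integral_congr_ae h3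
      _ = ∫ x, (μ⟦A ∩ s | mW⟧) x ∂μ := (integral_congr_ae h1).symm
      _ = ∫ x, (A ∩ s).indicator (fun _ => (1 : ℝ)) x ∂μ := integral_condExp hWΩ
      _ = ∫ x, s.indicator (A.indicator (fun _ => (1 : ℝ))) x ∂μ := by
          congr 1; funext x
          by_cases hx : x ∈ A <;> by_cases hx' : x ∈ s <;>
            simp [hx, hx', Set.indicator, Set.mem_inter_iff]
      _ = ∫ x in s, A.indicator (fun _ => (1 : ℝ)) x ∂μ := integral_indicator hsΩ
  -- `1_{A ∩ B} = 1_B * 1_A` and the pull-out property at level `mI`.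
  have hABind : (A ∩ B).indicator (fun _ => (1 : ℝ))
      = B.indicator (fun _ => (1 : ℝ)) * A.indicator (fun _ => (1 : ℝ)) := by
    funext x
    by_cases hx : x ∈ A <;> by_cases hx' : x ∈ B <;>
      simp [hx, hx', Set.indicator, Set.mem_inter_iff]
  have hABInt : Integrable (B.indicator (fun _ => (1 : ℝ)) * A.indicator (fun _ => (1 : ℝ))) μ := by
    rw [← hABind]; exact (integrable_const 1).indicator (hAΩ.inter hBΩ)
  have e1 : (μ⟦A ∩ B | mI⟧) =ᵐ[μ] B.indicator (fun _ => (1 : ℝ)) * (μ⟦A | mI⟧) := by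
    rw [show (μ⟦A ∩ B | mI⟧) = μ[(A ∩ B).indicator (fun _ => (1 : ℝ)) | mI] from rfl, hABind]
    exact condExp_mul_of_stronglyMeasurable_left (stronglyMeasurable_const.indicator hBI) hABInt hint
  have e2 : (μ⟦A ∩ B | mI⟧) =ᵐ[μ] B.indicator (fun _ => (1 : ℝ)) * (μ⟦A | mW⟧) :=
    e1.trans (Filter.EventuallyEq.mul Filter.EventuallyEq.rfl key.symm)
  -- Tower property down to `mS`.
  have tower : (μ⟦A ∩ B | mS⟧) =ᵐ[μ] μ[μ⟦A ∩ B | mI⟧ | mS] :=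
    (condExp_condExp_of_le hSI hIΩ).symm
  have e3 : (μ⟦A ∩ B | mS⟧) =ᵐ[μ]
      μ[(μ⟦A | mW⟧) * B.indicator (fun _ => (1 : ℝ)) | mS] := by
    refine tower.trans ((condExp_congr_ae (e2.trans ?_)))
    exact Filter.EventuallyEq.of_eq (mul_comm _ _)
  have hmulInt : Integrable ((μ⟦A | mW⟧) * B.indicator (fun _ => (1 : ℝ))) μ := by
    have : (μ⟦A | mW⟧) * B.indicator (fun _ => (1 : ℝ)) = B.indicator (μ⟦A | mW⟧) := by
      funext x; by_cases hx : x ∈ B <;> simp [hx]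
    rw [this]; exact integrable_condExp.indicator hBΩ
  have e4 : (μ[(μ⟦A | mW⟧) * B.indicator (fun _ => (1 : ℝ)) | mS]) =ᵐ[μ]
      (μ⟦A | mW⟧) * (μ⟦B | mS⟧) :=
    condExp_mul_of_aestronglyMeasurable_left
      (stronglyMeasurable_condExp.aestronglyMeasurable.mono hWS)
      hmulInt ((integrable_const 1).indicator hBΩ)
  have e5 : (μ⟦A | mS⟧) =ᵐ[μ] μ⟦A | mW⟧ := by
    have t1 : (μ⟦A | mS⟧) =ᵐ[μ] μ[μ⟦A | mI⟧ | mS] := (condExp_condExp_of_le hSI hIΩ).symm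
    have t2 : (μ[μ⟦A | mI⟧ | mS]) =ᵐ[μ] μ[μ⟦A | mW⟧ | mS] := condExp_congr_ae key.symm
    have t3 : (μ[μ⟦A | mW⟧ | mS]) =ᵐ[μ] μ⟦A | mW⟧ :=
      condExp_of_aestronglyMeasurable' hSΩ
        (stronglyMeasurable_condExp.aestronglyMeasurable.mono hWS) integrable_condExp
    exact (t1.trans t2).trans t3
  exact (e3.trans e4).trans (Filter.EventuallyEq.mul e5.symm Filter.EventuallyEq.rfl)
end

section
/- Let (Ω, mΩ, μ) be a probability space with Ω a standard Borel space, let S : Ω → 𝒮, Z : Ω → 𝒵 be measurable maps into measurable spaces, let g : 𝒮 × 𝒵 → 𝒴 be measurable and set Y := (ω ↦ g (S ω, Z ω)), let f : 𝒮 × 𝒵 → ℐ be a measurable embedding and set I := (ω ↦ f (S ω, Z ω)), and let ψ : ℐ → 𝒲 be measurable such that there is a measurable h : 𝒮 → 𝒲 with ψ(f(s, z)) = h(s) for all s, z. If σ(Y) and σ(I) are conditionally independent given σ(ψ ∘ I), then for every measurable set A ⊆ 𝒴 there exists a σ(S)-measurable set B ⊆ Ω with μ(Y⁻¹(A) Δ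 B) = 0; i.e., Y is almost surely determined by S. -/
open MeasureTheory ProbabilityTheory symmDiff

/-- If `t` is a set whose conditional expectation `p = μ⟦t | m'⟧` satisfies `p = p * p` a.e.,
then `t` agrees a.e. with an `m'`-measurable set. -/
lemma exists_measurableSet_symmDiff_eq_zero_of_condexp_idem
    {Ω : Type*} {m' mΩ : MeasurableSpace Ω} [StandardBorelSpace Ω]
    {μ : Measure Ω} [IsProbabilityMeasure μ]
    (hm' : m' ≤ mΩ) {t : Set Ω} (ht : MeasurableSet t)
    (key : (μ⟦t | m'⟧) =ᵐ[μ] (μ⟦t | m'⟧) * (μ⟦t | m'⟧)) :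
    ∃ B : Set Ω, MeasurableSet[m'] B ∧ μ (t ∆ B) = 0 := by
  set p : Ω → ℝ := μ⟦t | m'⟧ with hpdef
  have hp01 : ∀ᵐ ω ∂μ, p ω = 0 ∨ p ω = 1 := by
    filter_upwards [key] with ω hω
    have hmul : p ω * (p ω - 1) = 0 := by
      have h' := hω
      simp only [Pi.mul_apply] at h'
      nlinarith [h']
    rcases mul_eq_zero.mp hmul with h0 | h1
    · exact Or.inl h0
    · exact Or.inr (by linarith [sub_eq_zero.mp h1])
  haveI : SigmaFinite (μ.trim hm') := by
    have : IsFiniteMeasure (μ.trim hm') := isFiniteMeasure_trim hm'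
    infer_instance
  have hpmeas : StronglyMeasurable[m'] p := stronglyMeasurable_condExp
  set B : Set Ω := p ⁻¹' {1} with hBdef
  have hB : MeasurableSet[m'] B := hpmeas.measurable (measurableSet_singleton 1)
  have hB0 : MeasurableSet B := hm' _ hB
  refine ⟨B, hB, ?_⟩
  have hind : Integrable (t.indicator (fun _ => (1 : ℝ))) μ :=
    (integrable_const 1).indicator ht
  have hindint : ∀ s : Set Ω, MeasurableSet s →
      ∫ x in s, t.indicator (fun _ => (1 : ℝ)) x ∂μ = (μ (t ∩ s)).toReal := by
    intro s hs
    rw [setIntegral_indicator ht, setIntegral_const, smul_eq_mul, mul_one,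
      Set.inter_comm]
    rfl
  have h1 : ∫ x in B, p x ∂μ = (μ (t ∩ B)).toReal := by
    rw [hpdef, setIntegral_condExp hm' hind hB, hindint B hB0]
  have h2 : ∫ x in Bᶜ, p x ∂μ = (μ (t ∩ Bᶜ)).toReal := by
    rw [hpdef, setIntegral_condExp hm' hind hB.compl, hindint Bᶜ hB0.compl]
  have h3 : ∫ x in B, p x ∂μ = (μ B).toReal := by
    rw [setIntegral_congr_fun hB0 (fun x hx => hx), setIntegral_const, smul_eq_mul,
      mul_one]
    rfl
  have h4 : ∫ x in Bᶜ, p x ∂μ = 0 := by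
    have hz : ∀ᵐ x ∂μ, x ∈ Bᶜ → p x = 0 := by
      filter_upwards [hp01] with x hx hxB
      rcases hx with h0 | h1
      · exact h0
      · exact absurd h1 hxB
    calc ∫ x in Bᶜ, p x ∂μ = ∫ _ in Bᶜ, (0 : ℝ) ∂μ :=
          setIntegral_congr_ae hB0.compl hz
      _ = 0 := integral_zero _ _
  have hnull1 : μ (t \ B) = 0 := by
    rw [Set.diff_eq]
    have hz := h2.symm.trans h4
    exact ((ENNReal.toReal_eq_zero_iff _).mp hz).resolve_right (measure_ne_top μ _)
  have heqm : μ (t ∩ B) = μ B := by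
    have he := h1.symm.trans h3
    exact (ENNReal.toReal_eq_toReal_iff' (measure_ne_top μ _) (measure_ne_top μ _)).mp he
  have hnull2 : μ (B \ t) = 0 := by
    have hsum : μ (B ∩ t) + μ (B \ t) = μ B := measure_inter_add_diff B ht
    rw [Set.inter_comm, heqm] at hsum
    nth_rewrite 2 [← add_zero (μ B)] at hsum
    exact (ENNReal.add_right_inj (measure_ne_top μ B)).mp hsum
  rw [Set.symmDiff_def]
  exact measure_union_null hnull1 hnull2

/-- Key step of Theorem 2 (CutMix): if the label `Y = g (S, Z)` is rendered conditionally
independent of the image `I = f (S, Z)` by a representation `ψ` factoring through `S` alone,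
then `Y` is almost surely determined by `S`. -/
theorem label_ae_determined_by_causal
    {Ω 𝒮 𝒵 𝒴 ℐ 𝒲 : Type*} {mΩ : MeasurableSpace Ω} [StandardBorelSpace Ω]
    {m𝒮 : MeasurableSpace 𝒮} {m𝒵 : MeasurableSpace 𝒵} {m𝒴 : MeasurableSpace 𝒴}
    {mℐ : MeasurableSpace ℐ} {m𝒲 : MeasurableSpace 𝒲}
    (μ : Measure Ω) [IsProbabilityMeasure μ]
    {S : Ω → 𝒮} {Z : Ω → 𝒵}
    (hS : Measurable S) (hZ : Measurable Z)
    {g : 𝒮 × 𝒵 → 𝒴} (hg : Measurable g)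
    {f : 𝒮 × 𝒵 → ℐ} (hf : MeasurableEmbedding f)
    {ψ : ℐ → 𝒲} (hψ : Measurable ψ)
    {h : 𝒮 → 𝒲} (hh : Measurable h) (hψf : ∀ s z, ψ (f (s, z)) = h s)
    (hci : CondIndep
      (MeasurableSpace.comap (fun ω => ψ (f (S ω, Z ω))) m𝒲)
      (MeasurableSpace.comap (fun ω => g (S ω, Z ω)) m𝒴)
      (MeasurableSpace.comap (fun ω => f (S ω, Z ω)) mℐ)
      ((hψ.comp (hf.measurable.comp (hS.prodMk hZ))).comap_le) μ) :
    ∀ A : Set 𝒴, MeasurableSet A → ∃ B : Set Ω,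
      MeasurableSet[MeasurableSpace.comap S m𝒮] B ∧
      μ (((fun ω => g (S ω, Z ω)) ⁻¹' A) ∆ B) = 0 := by
  intro A hA
  have hm' : MeasurableSpace.comap (fun ω => ψ (f (S ω, Z ω))) m𝒲 ≤ mΩ :=
    (hψ.comp (hf.measurable.comp (hS.prodMk hZ))).comap_le
  have hYmeas : Measurable (fun ω => g (S ω, Z ω)) := hg.comp (hS.prodMk hZ)
  have ht : MeasurableSet ((fun ω => g (S ω, Z ω)) ⁻¹' A) := hYmeas hA
  have htY : MeasurableSet[MeasurableSpace.comap (fun ω => g (S ω, Z ω)) m𝒴]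
      ((fun ω => g (S ω, Z ω)) ⁻¹' A) := ⟨A, hA, rfl⟩
  have htI : MeasurableSet[MeasurableSpace.comap (fun ω => f (S ω, Z ω)) mℐ]
      ((fun ω => g (S ω, Z ω)) ⁻¹' A) := by
    refine ⟨f '' (g ⁻¹' A), hf.measurableSet_image' (hg hA), ?_⟩
    ext ω
    simp [hf.injective.mem_set_image]
  have key := (condIndep_iff _ _ _ hm' hYmeas.comap_le
      (hf.measurable.comp (hS.prodMk hZ)).comap_le μ).mp hci _ _ htY htI
  rw [Set.inter_self] at key
  obtain ⟨B, hB, hnull⟩ :=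
    exists_measurableSet_symmDiff_eq_zero_of_condexp_idem hm' ht key
  refine ⟨B, ?_, hnull⟩
  have hle : MeasurableSpace.comap (fun ω => ψ (f (S ω, Z ω))) m𝒲 ≤
      MeasurableSpace.comap S m𝒮 := by
    have heq : (fun ω => ψ (f (S ω, Z ω))) = h ∘ S := funext fun ω => hψf _ _
    rw [heq, ← MeasurableSpace.comap_comp]
    exact MeasurableSpace.comap_mono hh.comap_le
  exact hle _ hB
end

section
/- Let (Ω, mΩ, μ) be a probability space with Ω a standard Borel space, let S : Ω → 𝒮, Z : Ω → 𝒵 be measurable maps into measurable spaces, let g : 𝒮 × 𝒵 → 𝒴 be measurable and set Y := (ω ↦ g (S ω, Z ω)), let f : 𝒮 × 𝒵 → ℐ be a measurable embedding and set I := (ω ↦ f (S ω, Z ω)), and let ψ : ℐ → 𝒲 be measurable. Suppose there is some measurable A ⊆ 𝒴 such that Y⁻¹(A) is not μ-a.e. equal to any σ(S)-measurable set (the label genuinely depends on Z). If σ(Y) and σ(I) are conditionally independent given σ(ψ ∘ I), then there is no measurable h : 𝒮 → 𝒲 with ψ(f(s, z)) = h(s) for all s, z; that is, the learned representation ψ depends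 on the features Z. -/
open MeasureTheory ProbabilityTheory symmDiff

/-- If the conditional expectation of the indicator of `t` given `m'` is a.e. idempotent
(equal to its own square), then `t` is a.e. equal to an `m'`-measurable set. -/
private lemma exists_measurableSet_symmDiff_eq_zero_of_condexp_sq
    {Ω : Type*} {m' : MeasurableSpace Ω} {mΩ : MeasurableSpace Ω}
    (μ : Measure Ω) [IsProbabilityMeasure μ] (hm' : m' ≤ mΩ) {t : Set Ω} (htm : MeasurableSet[mΩ] t)
    (hcc : (μ⟦t | m'⟧) =ᵐ[μ] (μ⟦t | m'⟧) * (μ⟦t | m'⟧)) :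
    ∃ B : Set Ω, MeasurableSet[m'] B ∧ μ (t ∆ B) = 0 := by
  set c : Ω → ℝ := μ⟦t | m'⟧ with hc
  have hc01 : ∀ᵐ ω ∂μ, c ω = 0 ∨ c ω = 1 := by
    filter_upwards [hcc] with ω hω
    have hω' : c ω = c ω * c ω := hω
    have h2 : c ω * (c ω - 1) = 0 := by linear_combination -hω'
    rcases mul_eq_zero.mp h2 with h0 | h1
    · exact Or.inl h0
    · exact Or.inr (by linarith [sub_eq_zero.mp h1])
  have hcmeas : StronglyMeasurable[m'] c := stronglyMeasurable_condExp
  set B : Set Ω := c ⁻¹' {1} with hB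
  have hBm' : MeasurableSet[m'] B := hcmeas.measurable (measurableSet_singleton 1)
  have hBm : MeasurableSet[mΩ] B := hm' _ hBm'
  have hint : Integrable (t.indicator (fun _ => (1:ℝ))) μ :=
    (integrable_const 1).indicator htm
  have h1 : μ (t \ B) = 0 := by
    have hcompl : MeasurableSet[m'] Bᶜ := hBm'.compl
    have hint1 : ∫ ω in Bᶜ, c ω ∂μ = ∫ ω in Bᶜ, t.indicator (fun _ => (1:ℝ)) ω ∂μ :=
      setIntegral_condExp hm' hint hcompl
    have hzero : ∫ ω in Bᶜ, c ω ∂μ = 0 := by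
      rw [setIntegral_eq_zero_iff_of_nonneg_ae]
      · refine (ae_restrict_iff' hBm.compl).mpr ?_
        filter_upwards [hc01] with ω hω hωB
        rcases hω with h0 | h1
        · exact h0
        · exact absurd h1 hωB
      · refine (ae_restrict_iff' hBm.compl).mpr ?_
        filter_upwards [condExp_nonneg (ae_of_all μ
          (Set.indicator_nonneg (fun _ _ => zero_le_one) : 0 ≤ t.indicator (fun _ => (1:ℝ))))]
          with ω hω _
        exact hω
      · exact integrable_condExp.integrableOn
    have hind : ∫ ω in Bᶜ, t.indicator (fun _ => (1:ℝ)) ω ∂μ = (μ (t ∩ Bᶜ)).toReal := by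
      rw [setIntegral_indicator htm, setIntegral_const, smul_eq_mul, mul_one,
        Set.inter_comm, measureReal_def]
    have htoReal : (μ (t ∩ Bᶜ)).toReal = 0 := by rw [← hind, ← hint1, hzero]
    rcases (ENNReal.toReal_eq_zero_iff _).mp htoReal with h | h
    · rwa [Set.diff_eq]
    · exact absurd h (measure_ne_top μ _)
  have h2 : μ (B \ t) = 0 := by
    have hint1 : ∫ ω in B, c ω ∂μ = ∫ ω in B, t.indicator (fun _ => (1:ℝ)) ω ∂μ :=
      setIntegral_condExp hm' hint hBm'
    have hone : ∫ ω in B, c ω ∂μ = (μ B).toReal := by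
      have heq1 : ∫ ω in B, c ω ∂μ = ∫ _ω in B, (1:ℝ) ∂μ := by
        refine setIntegral_congr_ae hBm ?_
        filter_upwards with ω hω
        exact hω
      rw [heq1, setIntegral_const, smul_eq_mul, mul_one, measureReal_def]
    have hind : ∫ ω in B, t.indicator (fun _ => (1:ℝ)) ω ∂μ = (μ (t ∩ B)).toReal := by
      rw [setIntegral_indicator htm, setIntegral_const, smul_eq_mul, mul_one,
        Set.inter_comm, measureReal_def]
    have heq : (μ (t ∩ B)).toReal = (μ B).toReal := by rw [← hind, ← hint1, hone]
    have hmeq : μ (t ∩ B) = μ B :=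
      (ENNReal.toReal_eq_toReal_iff' (measure_ne_top μ _) (measure_ne_top μ _)).mp heq
    have hdiff : μ (B \ (t ∩ B)) = μ B - μ (t ∩ B) :=
      measure_diff Set.inter_subset_right (htm.inter hBm).nullMeasurableSet (measure_ne_top μ _)
    rw [Set.diff_inter_self_eq_diff] at hdiff
    rw [hdiff, hmeq, tsub_self]
  exact ⟨B, hBm', measure_union_null h1 h2⟩

/-- Theorem 2 (CutMix): if the label `Y = g (S, Z)` genuinely depends on `Z` (some preimage
`Y ⁻¹' A` is not a.e. equal to any `σ(S)`-measurable set), and `Y ⊥ I | ψ ∘ I` for the image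
`I = f (S, Z)`, then the representation `ψ` cannot factor through `S` alone: it depends on `Z`. -/
theorem cutmix_representation_depends_on_noncausal
    {Ω 𝒮 𝒵 𝒴 ℐ 𝒲 : Type*} {mΩ : MeasurableSpace Ω} [StandardBorelSpace Ω]
    {m𝒮 : MeasurableSpace 𝒮} {m𝒵 : MeasurableSpace 𝒵} {m𝒴 : MeasurableSpace 𝒴}
    {mℐ : MeasurableSpace ℐ} {m𝒲 : MeasurableSpace 𝒲}
    (μ : Measure Ω) [IsProbabilityMeasure μ]
    {S : Ω → 𝒮} {Z : Ω → 𝒵}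
    (hS : Measurable S) (hZ : Measurable Z)
    {g : 𝒮 × 𝒵 → 𝒴} (hg : Measurable g)
    {f : 𝒮 × 𝒵 → ℐ} (hf : MeasurableEmbedding f)
    {ψ : ℐ → 𝒲} (hψ : Measurable ψ)
    (hdep : ∃ A : Set 𝒴, MeasurableSet A ∧ ¬ ∃ B : Set Ω,
      MeasurableSet[MeasurableSpace.comap S m𝒮] B ∧
      μ (((fun ω => g (S ω, Z ω)) ⁻¹' A) ∆ B) = 0)
    (hci : CondIndep
      (MeasurableSpace.comap (fun ω => ψ (f (S ω, Z ω))) m𝒲)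
      (MeasurableSpace.comap (fun ω => g (S ω, Z ω)) m𝒴)
      (MeasurableSpace.comap (fun ω => f (S ω, Z ω)) mℐ)
      ((hψ.comp (hf.measurable.comp (hS.prodMk hZ))).comap_le) μ) :
    ¬ ∃ h : 𝒮 → 𝒲, Measurable h ∧ ∀ s z, ψ (f (s, z)) = h s := by
  rintro ⟨h, hh, hfac⟩
  obtain ⟨A, hA, hBad⟩ := hdep
  have hm' : MeasurableSpace.comap (fun ω => ψ (f (S ω, Z ω))) m𝒲 ≤ mΩ :=
    (hψ.comp (hf.measurable.comp (hS.prodMk hZ))).comap_le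
  have hmY : MeasurableSpace.comap (fun ω => g (S ω, Z ω)) m𝒴 ≤ mΩ :=
    (hg.comp (hS.prodMk hZ)).comap_le
  have hmI : MeasurableSpace.comap (fun ω => f (S ω, Z ω)) mℐ ≤ mΩ :=
    (hf.measurable.comp (hS.prodMk hZ)).comap_le
  -- the conditioning σ-algebra is contained in σ(S)
  have hm'S : MeasurableSpace.comap (fun ω => ψ (f (S ω, Z ω))) m𝒲
      ≤ MeasurableSpace.comap S m𝒮 := by
    have hfun : (fun ω => ψ (f (S ω, Z ω))) = h ∘ S := by
      funext ω; exact hfac (S ω) (Z ω)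
    rw [hfun, ← MeasurableSpace.comap_comp]
    exact MeasurableSpace.comap_mono hh.comap_le
  -- the event
  have htY : MeasurableSet[MeasurableSpace.comap (fun ω => g (S ω, Z ω)) m𝒴]
      ((fun ω => g (S ω, Z ω)) ⁻¹' A) := ⟨A, hA, rfl⟩
  have htI : MeasurableSet[MeasurableSpace.comap (fun ω => f (S ω, Z ω)) mℐ]
      ((fun ω => g (S ω, Z ω)) ⁻¹' A) := by
    refine ⟨f '' (g ⁻¹' A), hf.measurableSet_image' (hg hA), ?_⟩
    ext ω
    simp [hf.injective.mem_set_image]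
  have htm : MeasurableSet[mΩ] ((fun ω => g (S ω, Z ω)) ⁻¹' A) := hmY _ htY
  have hcc := (condIndep_iff _ _ _ hm' hmY hmI μ).mp hci _ _ htY htI
  rw [Set.inter_self] at hcc
  obtain ⟨B, hBm', hBae⟩ :=
    exists_measurableSet_symmDiff_eq_zero_of_condexp_sq μ hm' htm hcc
  exact hBad ⟨B, hm'S _ hBm', hBae⟩
end
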